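/- Let h : ℝⁿ → ℝ be a harmonic polynomial of degree d ≥ 1, x ∈ Σ_h, and write h(y) = h_d^{(x)}(y−x) + ⋯ + h_j^{(x)}(y−x) with h_j^{(x)} ≠ 0 the lowest nonzero homogeneous part. Then the unique geometric blow-up of Σ_h at x is Σ_{h_j^{(x)}}: for every sequence r_i ↓ 0 and every s > 0, the Hausdorff distance between ((Σ_h − x)/r_i) ∩ B(0,s) and Σ_{h_j^{(x)}} ∩ B(0,s) tends to 0. -/

import Mathlib

open MvPolynomial Metric Filter
open scoped ENNReal

/-- Evaluate a multivariate polynomial at a point of Euclidean space. -/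
noncomputable def evalPt {n : ℕ} (p : MvPolynomial (Fin n) ℝ)
    (y : EuclideanSpace ℝ (Fin n)) : ℝ :=
  MvPolynomial.eval (fun i => y i) p

/-- The zero set of a polynomial. -/
def zeroSet {n : ℕ} (p : MvPolynomial (Fin n) ℝ) : Set (EuclideanSpace ℝ (Fin n)) :=
  {y | evalPt p y = 0}

/-- The polynomial y ↦ p(y + x). -/
noncomputable def translatePoly {n : ℕ} (p : MvPolynomial (Fin n) ℝ)
    (x : EuclideanSpace ℝ (Fin n)) : MvPolynomial (Fin n) ℝ :=
  MvPolynomial.bind₁ (fun i => MvPolynomial.X i + MvPolynomial.C (x i)) p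

/-- The homogeneous part of degree `k` of `p` centered at `x`. -/
noncomputable def homPart {n : ℕ} (p : MvPolynomial (Fin n) ℝ)
    (x : EuclideanSpace ℝ (Fin n)) (k : ℕ) : MvPolynomial (Fin n) ℝ :=
  MvPolynomial.homogeneousComponent k (translatePoly p x)

/-- The sup norm of |q| on the closed ball B(0,r), as an extended nonnegative real. -/
noncomputable def supNormBall {n : ℕ} (q : MvPolynomial (Fin n) ℝ) (r : ℝ) : ℝ≥0∞ :=
  ⨆ y ∈ Metric.closedBall (0 : EuclideanSpace ℝ (Fin n)) r, ENNReal.ofReal |evalPt q y|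

/-- ζ_k(p,x,r): the relative size of the homogeneous part of degree k of a polynomial of
degree d, centered at x, on the ball of radius r. -/
noncomputable def zeta {n : ℕ} (d : ℕ) (p : MvPolynomial (Fin n) ℝ)
    (x : EuclideanSpace ℝ (Fin n)) (k : ℕ) (r : ℝ) : ℝ≥0∞ :=
  ⨆ j ∈ (Finset.range (d + 1)).erase k,
    supNormBall (homPart p x j) r / supNormBall (homPart p x k) r

/-- A polynomial is harmonic if its Laplacian vanishes. -/
def IsHarmonic {n : ℕ} (p : MvPolynomial (Fin n) ℝ) : Prop :=
  ∑ i : Fin n, MvPolynomial.pderiv i (MvPolynomial.pderiv i p) = 0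

/-- The local flatness θ_Σ(x,r): the normalized minimal Hausdorff distance between
Σ ∩ B(x,r) and (x + L) ∩ B(x,r) over hyperplanes L through the origin. -/
noncomputable def flatness {n : ℕ} (A : Set (EuclideanSpace ℝ (Fin n)))
    (x : EuclideanSpace ℝ (Fin n)) (r : ℝ) : ℝ :=
  (1 / r) * ⨅ L : {L : Submodule ℝ (EuclideanSpace ℝ (Fin n)) // Module.finrank ℝ L = n - 1},
    Metric.hausdorffDist (A ∩ Metric.closedBall x r)
      (((fun y => x + y) '' (L.1 : Set (EuclideanSpace ℝ (Fin n)))) ∩ Metric.closedBall x r)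

/-- Dp(x) ≠ 0 : some partial derivative of p is nonzero at x. -/
def gradNeZero {n : ℕ} (p : MvPolynomial (Fin n) ℝ) (x : EuclideanSpace ℝ (Fin n)) : Prop :=
  ∃ i : Fin n, MvPolynomial.eval (fun j => x j) (MvPolynomial.pderiv i p) ≠ 0

/-- Sup of |h| on the unit sphere. -/
noncomputable def sphereSup {n : ℕ} (h : MvPolynomial (Fin n) ℝ) : ℝ :=
  sSup ((fun θ => |evalPt h θ|) '' Metric.sphere (0 : EuclideanSpace ℝ (Fin n)) 1)

/-- The polynomial y ↦ p(t·y). -/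
noncomputable def dilatePoly {n : ℕ} (p : MvPolynomial (Fin n) ℝ) (t : ℝ) :
    MvPolynomial (Fin n) ℝ :=
  MvPolynomial.bind₁ (fun i => MvPolynomial.C t * MvPolynomial.X i) p


section AuxiliaryLemmas
open MeasureTheory Real
noncomputable section

noncomputable def gm (k : ℕ) : ℝ := ∫ t : ℝ, t ^ k * Real.exp (-(1/2) * t ^ 2)

lemma integrable_pow_gauss (k : ℕ) :
    Integrable (fun t : ℝ => t ^ k * Real.exp (-(1/2) * t ^ 2)) := by
  have h := integrable_rpow_mul_exp_neg_mul_sq (b := 1/2) (by norm_num)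
    (s := (k : ℝ)) (by exact lt_of_lt_of_le (by norm_num) (Nat.cast_nonneg k))
  simpa [Real.rpow_natCast] using h

lemma abs_pow_gauss (k : ℕ) (t : ℝ) :
    |t ^ k * Real.exp (-(1/2) * t ^ 2)|
      = (t ^ 2) ^ ((k : ℝ)/2) * Real.exp (-(1/2) * t ^ 2) := by
  have h1 : (t ^ 2 : ℝ) ^ ((k : ℝ)/2) = |t| ^ k := by
    rw [← sq_abs t]
    rw [← Real.rpow_natCast |t| 2, ← Real.rpow_natCast |t| k,
      ← Real.rpow_mul (abs_nonneg t)]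
    rw [show ((2:ℕ):ℝ) * ((k:ℝ)/2) = (k:ℝ) by push_cast; ring, Real.rpow_natCast]
  rw [h1, abs_mul, abs_pow, abs_of_pos (Real.exp_pos _)]

lemma tendsto_sq_atTop_atTop : Tendsto (fun t : ℝ => t ^ 2) atTop atTop :=
  tendsto_pow_atTop (by norm_num)

lemma tendsto_sq_atBot_atTop : Tendsto (fun t : ℝ => t ^ 2) atBot atTop := by
  have h : Tendsto (fun t : ℝ => |t| ^ 2) atBot atTop :=
    (tendsto_pow_atTop (n := 2) (by norm_num)).comp tendsto_abs_atBot_atTop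
  exact h.congr fun t => sq_abs t

lemma tendsto_pow_gauss (k : ℕ) (l : Filter ℝ)
    (hl : Tendsto (fun t : ℝ => t ^ 2) l atTop) :
    Tendsto (fun t : ℝ => t ^ k * Real.exp (-(1/2) * t ^ 2)) l (nhds 0) := by
  have hψ : Tendsto (fun u : ℝ => u ^ ((k : ℝ)/2) * Real.exp (-(1/2) * u)) atTop (nhds 0) :=
    tendsto_rpow_mul_exp_neg_mul_atTop_nhds_zero _ _ (by norm_num)
  have habs : Tendsto (fun t : ℝ => |t ^ k * Real.exp (-(1/2) * t ^ 2)|) l (nhds 0) := by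
    have := hψ.comp hl
    refine this.congr fun t => ?_
    simp only [Function.comp]
    rw [abs_pow_gauss]
  have hneg := habs.neg
  rw [neg_zero] at hneg
  exact tendsto_of_tendsto_of_tendsto_of_le_of_le hneg habs
    (fun t => neg_abs_le _) (fun t => le_abs_self _)

lemma integral_deriv_zero {g g' : ℝ → ℝ} (hg : ∀ t, HasDerivAt g (g' t) t)
    (hint : Integrable g') (htop : Tendsto g atTop (nhds 0))
    (hbot : Tendsto g atBot (nhds 0)) :
    ∫ t : ℝ, g' t = 0 := by
  have h1 : Tendsto (fun R : ℝ => ∫ t in (-R)..R, g' t) atTop (nhds (∫ t, g' t)) :=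
    intervalIntegral_tendsto_integral hint tendsto_neg_atTop_atBot tendsto_id
  have h2 : ∀ R : ℝ, (∫ t in (-R)..R, g' t) = g R - g (-R) := fun R =>
    intervalIntegral.integral_eq_sub_of_hasDerivAt (fun x _ => hg x)
      hint.intervalIntegrable
  have h3 : Tendsto (fun R : ℝ => g R - g (-R)) atTop (nhds (0 - 0)) :=
    htop.sub (hbot.comp tendsto_neg_atTop_atBot)
  rw [show (0:ℝ) - 0 = 0 by ring] at h3
  exact tendsto_nhds_unique (h1.congr h2) h3

lemma gm_one : gm 1 = 0 := by
  have hg : ∀ t : ℝ, HasDerivAt (fun t : ℝ => -Real.exp (-(1/2) * t ^ 2))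
      (t ^ 1 * Real.exp (-(1/2) * t ^ 2)) t := by
    intro t
    have h1 : HasDerivAt (fun t : ℝ => -(1/2) * t ^ 2) (-(1/2) * (2 * t)) t := by
      simpa using ((hasDerivAt_pow 2 t).const_mul (-(1/2) : ℝ))
    have h2 := (h1.exp).neg
    exact h2.congr_deriv (by ring)
  have ht := (tendsto_pow_gauss 0 atTop tendsto_sq_atTop_atTop).neg
  have hb := (tendsto_pow_gauss 0 atBot tendsto_sq_atBot_atTop).neg
  rw [neg_zero] at ht hb
  have := integral_deriv_zero hg (integrable_pow_gauss 1) (ht.congr fun t => by simp)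
    (hb.congr fun t => by simp)
  simpa [gm] using this

lemma gm_rec (k : ℕ) : gm (k + 2) = (k + 1 : ℝ) * gm k := by
  have hg : ∀ t : ℝ, HasDerivAt (fun t : ℝ => t ^ (k+1) * Real.exp (-(1/2) * t ^ 2))
      ((k+1 : ℝ) * (t ^ k * Real.exp (-(1/2) * t ^ 2))
        - t ^ (k+2) * Real.exp (-(1/2) * t ^ 2)) t := by
    intro t
    have h1 : HasDerivAt (fun t : ℝ => -(1/2) * t ^ 2) (-(1/2) * (2 * t)) t := by
      simpa using ((hasDerivAt_pow 2 t).const_mul (-(1/2) : ℝ))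
    have h2 := (hasDerivAt_pow (k+1) t).mul h1.exp
    exact h2.congr_deriv (by push_cast; ring)
  have h0 := integral_deriv_zero hg
    (((integrable_pow_gauss k).const_mul _).sub (integrable_pow_gauss (k+2)))
    (tendsto_pow_gauss (k+1) atTop tendsto_sq_atTop_atTop)
    (tendsto_pow_gauss (k+1) atBot tendsto_sq_atBot_atTop)
  rw [integral_sub ((integrable_pow_gauss k).const_mul _) (integrable_pow_gauss (k+2)),
    integral_const_mul, sub_eq_zero] at h0
  rw [gm, gm, ← h0]


def gaussN (n : ℕ) (y : Fin n → ℝ) : ℝ := ∏ i, Real.exp (-(1/2) * (y i) ^ 2)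

lemma gaussN_pos (n : ℕ) (y : Fin n → ℝ) : 0 < gaussN n y :=
  Finset.prod_pos fun i _ => Real.exp_pos _

lemma gaussN_continuous (n : ℕ) : Continuous (gaussN n) :=
  continuous_finset_prod _ fun i _ =>
    Real.continuous_exp.comp (continuous_const.mul ((continuous_apply i).pow 2))

lemma integrand_eq {n : ℕ} (q : MvPolynomial (Fin n) ℝ) (y : Fin n → ℝ) :
    eval y q * gaussN n y
      = ∑ d ∈ q.support, coeff d q *
          ∏ i, (y i ^ d i * Real.exp (-(1/2) * (y i) ^ 2)) := by
  rw [eval_eq', Finset.sum_mul]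
  refine Finset.sum_congr rfl fun d _ => ?_
  rw [mul_assoc, gaussN, ← Finset.prod_mul_distrib]

lemma integrable_poly_gauss {n : ℕ} (q : MvPolynomial (Fin n) ℝ) :
    Integrable (fun y : Fin n → ℝ => eval y q * gaussN n y) := by
  have h : ∀ d : Fin n →₀ ℕ, Integrable (fun y : Fin n → ℝ =>
      ∏ i, (y i ^ d i * Real.exp (-(1/2) * (y i) ^ 2))) := fun d =>
    Integrable.fintype_prod fun i => integrable_pow_gauss (d i)
  exact (integrable_finset_sum _ fun d _ => ((h d).const_mul _)).congr
    (Filter.Eventually.of_forall fun y => (integrand_eq q y).symm)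

def TT {n : ℕ} (q : MvPolynomial (Fin n) ℝ) : ℝ :=
  ∫ y : Fin n → ℝ, eval y q * gaussN n y

lemma TT_eq {n : ℕ} (q : MvPolynomial (Fin n) ℝ) :
    TT q = ∑ d ∈ q.support, coeff d q * ∏ i, gm (d i) := by
  have h : ∀ d : Fin n →₀ ℕ, Integrable (fun y : Fin n → ℝ =>
      ∏ i, (y i ^ d i * Real.exp (-(1/2) * (y i) ^ 2))) := fun d =>
    Integrable.fintype_prod fun i => integrable_pow_gauss (d i)
  rw [TT]
  rw [integral_congr_ae (Filter.Eventually.of_forall fun y => integrand_eq q y)]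
  rw [integral_finset_sum _ fun d _ => ((h d).const_mul _)]
  refine Finset.sum_congr rfl fun d _ => ?_
  rw [integral_const_mul]
  have := MeasureTheory.integral_fintype_prod_eq_prod (ι := Fin n) (μ := fun _ => volume)
    (f := fun (i : Fin n) (t : ℝ) => t ^ d i * Real.exp (-(1/2) * t ^ 2))
  rw [← MeasureTheory.volume_pi] at this
  rw [this]
  simp only [gm]

lemma TT_monomial {n : ℕ} (d : Fin n →₀ ℕ) (a : ℝ) :
    TT (monomial d a) = a * ∏ i, gm (d i) := by
  rw [TT_eq, support_monomial]
  by_cases ha : a = 0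
  · simp [ha]
  · simp [ha, coeff_monomial]

lemma TT_add {n : ℕ} (p q : MvPolynomial (Fin n) ℝ) : TT (p + q) = TT p + TT q := by
  have h : (fun y : Fin n → ℝ => eval y (p + q) * gaussN n y)
      = fun y => eval y p * gaussN n y + eval y q * gaussN n y :=
    funext fun y => by simp [add_mul]
  rw [TT, h, integral_add (integrable_poly_gauss p) (integrable_poly_gauss q)]
  rfl

lemma TT_zero {n : ℕ} : TT (0 : MvPolynomial (Fin n) ℝ) = 0 := by simp [TT]

lemma TT_sum {n : ℕ} {ι : Type*} (s : Finset ι) (f : ι → MvPolynomial (Fin n) ℝ) :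
    TT (∑ x ∈ s, f x) = ∑ x ∈ s, TT (f x) := by
  classical
  induction s using Finset.induction_on with
  | empty => simp [TT_zero]
  | insert _ _ hx ih => rw [Finset.sum_insert hx, Finset.sum_insert hx, TT_add, ih]

lemma TT_C_mul {n : ℕ} (c : ℝ) (q : MvPolynomial (Fin n) ℝ) : TT (C c * q) = c * TT q := by
  have h : (fun y : Fin n → ℝ => eval y (C c * q) * gaussN n y)
      = fun y => c * (eval y q * gaussN n y) := funext fun y => by simp [mul_assoc]
  rw [TT, h, integral_const_mul]
  rfl

lemma X_eq_monomial' {n : ℕ} (i : Fin n) :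
    (X i : MvPolynomial (Fin n) ℝ) = monomial (Finsupp.single i 1) 1 := by
  rw [← pow_one (X i), X_pow_eq_monomial]

lemma prod_gm_eq {n : ℕ} (i : Fin n) (e d : Fin n →₀ ℕ)
    (h : ∀ l, l ≠ i → e l = d l) :
    ∏ l, gm (e l) = gm (e i) * ∏ l ∈ Finset.univ \ {i}, gm (d l) := by
  rw [Finset.prod_eq_mul_prod_sdiff_singleton_of_mem (Finset.mem_univ i) (fun l => gm (e l))]
  refine congrArg _ (Finset.prod_congr rfl fun l hl => ?_)
  rw [h l (by simpa using (Finset.mem_sdiff.mp hl).2)]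

lemma TT_A_monomial {n : ℕ} (i : Fin n) (d : Fin n →₀ ℕ) (a : ℝ) :
    TT (pderiv i (pderiv i (monomial d a)))
      = TT (X i ^ 2 * monomial d a) - TT (monomial d a) := by
  rw [pderiv_monomial, pderiv_monomial, X_pow_eq_monomial, monomial_mul,
    TT_monomial, TT_monomial, TT_monomial]
  rw [prod_gm_eq i (d - Finsupp.single i 1 - Finsupp.single i 1) d (fun l hl => by
      simp [Finsupp.tsub_apply, Finsupp.single_apply, (Ne.symm hl : ¬ i = l)]),
    prod_gm_eq i (Finsupp.single i 2 + d) d (fun l hl => by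
      simp [Finsupp.single_apply, (Ne.symm hl : ¬ i = l)]),
    prod_gm_eq i d d (fun l _ => rfl)]
  have e1 : (d - Finsupp.single i 1 : Fin n →₀ ℕ) i = d i - 1 := by
    simp [Finsupp.tsub_apply]
  have e2 : (d - Finsupp.single i 1 - Finsupp.single i 1 : Fin n →₀ ℕ) i = d i - 1 - 1 := by
    simp [Finsupp.tsub_apply]
  have e3 : (Finsupp.single i 2 + d : Fin n →₀ ℕ) i = 2 + d i := by simp
  rw [e1, e2, e3]
  cases hk : d i with
  | zero =>
    have hg : gm (2 + 0) = 1 * gm 0 := by simpa using gm_rec 0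
    rw [hg]
    push_cast
    ring
  | succ k =>
    cases k with
    | zero =>
      have hg : gm (2 + 1) = 2 * gm 1 := by
        rw [show (2:ℕ) + 1 = 1 + 2 by norm_num, gm_rec 1]
        norm_num
      rw [show (1:ℕ) - 1 - 1 = 0 by rfl, hg, gm_one]
      push_cast
      ring
    | succ k =>
      rw [show k + 1 + 1 - 1 - 1 = k by omega, show k + 1 + 1 - 1 = k + 1 by omega,
        show (2:ℕ) + (k + 1 + 1) = (k + 2) + 2 by omega,
        show k + 1 + 1 = k + 2 by omega, gm_rec (k+2), gm_rec k]
      push_cast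
      ring

lemma TT_B_monomial {n : ℕ} (i : Fin n) (d : Fin n →₀ ℕ) (a : ℝ) :
    TT (X i * pderiv i (monomial d a))
      = TT (X i ^ 2 * monomial d a) - TT (monomial d a) := by
  rw [X_pow_eq_monomial, monomial_mul, pderiv_monomial, X_eq_monomial', monomial_mul,
    TT_monomial, TT_monomial, TT_monomial]
  rw [prod_gm_eq i (Finsupp.single i 1 + (d - Finsupp.single i 1)) d (fun l hl => by
      simp [Finsupp.tsub_apply, Finsupp.single_apply, (Ne.symm hl : ¬ i = l)]),
    prod_gm_eq i (Finsupp.single i 2 + d) d (fun l hl => by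
      simp [Finsupp.single_apply, (Ne.symm hl : ¬ i = l)]),
    prod_gm_eq i d d (fun l _ => rfl)]
  have e1 : (Finsupp.single i 1 + (d - Finsupp.single i 1) : Fin n →₀ ℕ) i = 1 + (d i - 1) := by
    simp [Finsupp.tsub_apply]
  have e3 : (Finsupp.single i 2 + d : Fin n →₀ ℕ) i = 2 + d i := by simp
  rw [e1, e3]
  cases hk : d i with
  | zero =>
    have hg : gm (2 + 0) = 1 * gm 0 := by simpa using gm_rec 0
    rw [hg]
    push_cast
    ring
  | succ k =>
    rw [show 1 + (k + 1 - 1) = k + 1 by omega,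
      show (2:ℕ) + (k + 1) = (k + 1) + 2 by omega, gm_rec (k+1)]
    push_cast
    ring

lemma TT_A {n : ℕ} (q : MvPolynomial (Fin n) ℝ) (i : Fin n) :
    TT (pderiv i (pderiv i q)) = TT (X i ^ 2 * q) - TT q := by
  induction q using MvPolynomial.induction_on' with
  | monomial d a => exact TT_A_monomial i d a
  | add p q hp hq =>
    rw [map_add, map_add, TT_add, mul_add, TT_add, TT_add, hp, hq]
    ring

lemma TT_B {n : ℕ} (q : MvPolynomial (Fin n) ℝ) (i : Fin n) :
    TT (X i * pderiv i q) = TT (X i ^ 2 * q) - TT q := by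
  induction q using MvPolynomial.induction_on' with
  | monomial d a => exact TT_B_monomial i d a
  | add p q hp hq =>
    rw [map_add, mul_add, TT_add, mul_add, TT_add, TT_add, hp, hq]
    ring

lemma degree_eq_sum_univ {n : ℕ} (d : Fin n →₀ ℕ) :
    Finsupp.degree d = ∑ i, d i :=
  Finset.sum_subset (Finset.subset_univ _)
    (fun i _ hi => Finsupp.notMem_support_iff.mp hi)

lemma euler_monomial {n : ℕ} (d : Fin n →₀ ℕ) (a : ℝ) :
    ∑ i, X i * pderiv i (monomial d a) = monomial d (a * ((Finsupp.degree d : ℕ) : ℝ)) := by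
  have key : ∀ i : Fin n, X i * pderiv i (monomial d a) = monomial d (a * (d i : ℝ)) := by
    intro i
    rw [pderiv_monomial, X_eq_monomial', monomial_mul, one_mul]
    by_cases h0 : d i = 0
    · simp [h0]
    · have hexp : Finsupp.single i 1 + (d - Finsupp.single i 1) = d := by
        ext l
        by_cases hl : l = i
        · subst hl
          simp only [Finsupp.add_apply, Finsupp.tsub_apply, Finsupp.single_apply, if_pos rfl,
            if_true]
          omega
        · simp [Finsupp.single_apply, (Ne.symm hl : ¬ i = l), Finsupp.tsub_apply]
      rw [hexp]
  rw [Finset.sum_congr rfl fun i _ => key i]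
  rw [← map_sum (monomial d), ← Finset.mul_sum]
  congr 1
  rw [degree_eq_sum_univ]
  push_cast
  rfl

lemma euler {n m : ℕ} (q : MvPolynomial (Fin n) ℝ) (h : q.IsHomogeneous m) :
    ∑ i, X i * pderiv i q = C (m : ℝ) * q := by
  conv_lhs => rw [as_sum q]
  conv_rhs => rw [as_sum q]
  rw [Finset.mul_sum]
  have : ∀ i : Fin n, X i * pderiv i (∑ d ∈ q.support, monomial d (coeff d q))
      = ∑ d ∈ q.support, X i * pderiv i (monomial d (coeff d q)) := by
    intro i; rw [map_sum, Finset.mul_sum]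
  rw [Finset.sum_congr rfl fun i _ => this i, Finset.sum_comm]
  refine Finset.sum_congr rfl fun d hd => ?_
  rw [euler_monomial, C_mul_monomial]
  congr 1
  have hdeg : Finsupp.degree d = m := by
    have := h (mem_support_iff.mp hd)
    rw [Finsupp.degree_eq_weight_one]; exact this
  rw [hdeg]
  ring

lemma harmonic_nonneg_zero {n m : ℕ} (hm : 1 ≤ m) (q : MvPolynomial (Fin n) ℝ)
    (hhom : q.IsHomogeneous m)
    (hharm : ∑ i : Fin n, pderiv i (pderiv i q) = 0)
    (hpos : ∀ y : Fin n → ℝ, 0 ≤ eval y q) : q = 0 := by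
  have h1 : ∑ i : Fin n, TT (pderiv i (pderiv i q)) = 0 := by
    rw [← TT_sum Finset.univ _, hharm, TT_zero]
  have h2 : (m : ℝ) * TT q = 0 := by
    calc (m : ℝ) * TT q = TT (C (m:ℝ) * q) := (TT_C_mul _ _).symm
    _ = TT (∑ i, X i * pderiv i q) := by rw [euler q hhom]
    _ = ∑ i, TT (X i * pderiv i q) := TT_sum _ _
    _ = ∑ i, TT (pderiv i (pderiv i q)) :=
        Finset.sum_congr rfl fun i _ => by rw [TT_B, TT_A]
    _ = 0 := h1
  have hT : TT q = 0 := by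
    have hm' : (m : ℝ) ≠ 0 := by positivity
    exact (mul_eq_zero.mp h2).resolve_left hm'
  have h0 : (fun y : Fin n → ℝ => eval y q * gaussN n y) =ᵐ[volume] 0 :=
    (integral_eq_zero_iff_of_nonneg_ae
      (Filter.Eventually.of_forall fun y => mul_nonneg (hpos y) (gaussN_pos n y).le)
      (integrable_poly_gauss q)).mp hT
  have hcont : Continuous (fun y : Fin n → ℝ => eval y q * gaussN n y) :=
    (MvPolynomial.continuous_eval q).mul (gaussN_continuous n)
  have heq : (fun y : Fin n → ℝ => eval y q * gaussN n y) = 0 :=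
    (Continuous.ae_eq_iff_eq volume hcont continuous_const).mp h0
  refine MvPolynomial.funext fun y => ?_
  simp only [map_zero]
  have hy : eval y q * gaussN n y = 0 := congrFun heq y
  exact (mul_eq_zero.mp hy).resolve_right (ne_of_gt (gaussN_pos n y))


lemma degree_eq_sum_univ' {n : ℕ} (d : Fin n →₀ ℕ) :
    Finsupp.degree d = ∑ i, d i :=
  Finset.sum_subset (Finset.subset_univ _)
    (fun i _ hi => Finsupp.notMem_support_iff.mp hi)

lemma isHomogeneous_degree {n k : ℕ} {q : MvPolynomial (Fin n) ℝ}
    (h : q.IsHomogeneous k) {d : Fin n →₀ ℕ} (hd : d ∈ q.support) :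
    Finsupp.degree d = k := by
  have := h (mem_support_iff.mp hd)
  rw [Finsupp.degree_eq_weight_one]; exact this

lemma isHomogeneous_pderiv {n : ℕ} {q : MvPolynomial (Fin n) ℝ} {k : ℕ} (i : Fin n)
    (h : q.IsHomogeneous k) : (MvPolynomial.pderiv i q).IsHomogeneous (k - 1) := by
  have hq : MvPolynomial.pderiv i q
      = ∑ d ∈ q.support, MvPolynomial.pderiv i (monomial d (coeff d q)) := by
    conv_lhs => rw [as_sum q, map_sum]
  rw [hq]
  refine IsHomogeneous.sum _ _ _ fun d hd => ?_
  rw [pderiv_monomial]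
  by_cases h0 : d i = 0
  · rw [h0]
    norm_num
    exact isHomogeneous_zero _ _ _
  · apply isHomogeneous_monomial
    have hdeg : Finsupp.degree d = k := isHomogeneous_degree h hd
    have hsplit : ∀ e : Fin n →₀ ℕ,
        Finsupp.degree e = e i + ∑ l ∈ Finset.univ \ {i}, e l := fun e => by
      rw [degree_eq_sum_univ', Finset.sum_eq_add_sum_sdiff_singleton_of_mem (Finset.mem_univ i)]
    have hoff : ∑ l ∈ Finset.univ \ {i}, (d - Finsupp.single i 1 : Fin n →₀ ℕ) l
        = ∑ l ∈ Finset.univ \ {i}, d l := by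
      refine Finset.sum_congr rfl fun l hl => ?_
      have hne : l ≠ i := by simpa using (Finset.mem_sdiff.mp hl).2
      simp [Finsupp.tsub_apply, Finsupp.single_apply, (Ne.symm hne : ¬ i = l)]
    have hii : (d - Finsupp.single i 1 : Fin n →₀ ℕ) i = d i - 1 := by
      simp [Finsupp.tsub_apply]
    rw [hsplit, hoff, hii]
    rw [hsplit d] at hdeg
    omega

lemma pderiv_eq_zero_of_isHomogeneous_zero {n : ℕ} (P : MvPolynomial (Fin n) ℝ)
    (h : P.IsHomogeneous 0) (i : Fin n) : MvPolynomial.pderiv i P = 0 := by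
  have hq : MvPolynomial.pderiv i P
      = ∑ d ∈ P.support, MvPolynomial.pderiv i (monomial d (coeff d P)) := by
    conv_lhs => rw [as_sum P, map_sum]
  rw [hq]
  refine Finset.sum_eq_zero fun d hd => ?_
  have hd0 : d = 0 := by
    rw [← Finsupp.degree_eq_zero_iff]
    exact isHomogeneous_degree h hd
  subst hd0
  rw [pderiv_monomial]
  simp

lemma pderiv_pderiv_eq_zero_of_le_one {n : ℕ} {q : MvPolynomial (Fin n) ℝ} {k : ℕ}
    (h : q.IsHomogeneous k) (hk : k ≤ 1) (i : Fin n) :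
    MvPolynomial.pderiv i (MvPolynomial.pderiv i q) = 0 := by
  have h1 : (MvPolynomial.pderiv i q).IsHomogeneous 0 := by
    have := isHomogeneous_pderiv i h
    interval_cases k
    · simpa using this
    · simpa using this
  simp [pderiv_eq_zero_of_isHomogeneous_zero _ h1]

lemma lap_hc_isHomogeneous {n : ℕ} (P : MvPolynomial (Fin n) ℝ) (l : ℕ) :
    (∑ i : Fin n, MvPolynomial.pderiv i (MvPolynomial.pderiv i
      (homogeneousComponent l P))) ∈ homogeneousSubmodule (Fin n) ℝ (l - 2) := by
  rw [mem_homogeneousSubmodule]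
  refine IsHomogeneous.sum _ _ _ fun i _ => ?_
  have := isHomogeneous_pderiv i (isHomogeneous_pderiv i
    (homogeneousComponent_isHomogeneous l P))
  simpa [Nat.sub_sub] using this

lemma harmonic_homogeneousComponent {n : ℕ} (P : MvPolynomial (Fin n) ℝ)
    (hP : ∑ i : Fin n, MvPolynomial.pderiv i (MvPolynomial.pderiv i P) = 0) (k : ℕ) :
    ∑ i : Fin n, MvPolynomial.pderiv i (MvPolynomial.pderiv i
      (homogeneousComponent k P)) = 0 := by
  rcases le_or_gt k 1 with hk | hk
  · exact Finset.sum_eq_zero fun i _ =>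
      pderiv_pderiv_eq_zero_of_le_one (homogeneousComponent_isHomogeneous k P) hk i
  rcases le_or_gt k (P.totalDegree) with hk2 | hk2
  swap
  · rw [homogeneousComponent_eq_zero _ _ hk2]
    simp
  have h0 : (0 : MvPolynomial (Fin n) ℝ)
      = ∑ l ∈ Finset.range (P.totalDegree + 1),
          ∑ i : Fin n, MvPolynomial.pderiv i (MvPolynomial.pderiv i
            (homogeneousComponent l P)) := by
    rw [← hP]
    conv_lhs => rw [← sum_homogeneousComponent P]
    rw [Finset.sum_comm]
    refine Finset.sum_congr rfl fun l _ => ?_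
    rw [map_sum, map_sum]
  have hkey := congrArg (homogeneousComponent (k - 2)) h0
  rw [map_zero, map_sum] at hkey
  rw [Finset.sum_eq_single_of_mem k (Finset.mem_range.mpr (by omega))] at hkey
  · rw [homogeneousComponent_of_mem (lap_hc_isHomogeneous P k), if_pos rfl] at hkey
    exact hkey.symm
  · intro l _ hlk
    rcases le_or_gt l 1 with hl | hl
    · rw [Finset.sum_eq_zero fun i _ =>
        pderiv_pderiv_eq_zero_of_le_one (homogeneousComponent_isHomogeneous l P) hl i]
      exact map_zero _
    · rw [homogeneousComponent_of_mem (lap_hc_isHomogeneous P l), if_neg (by omega)]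

lemma pderiv_translatePoly {n : ℕ} (q : MvPolynomial (Fin n) ℝ)
    (x : EuclideanSpace ℝ (Fin n)) (i : Fin n) :
    MvPolynomial.pderiv i (translatePoly q x)
      = translatePoly (MvPolynomial.pderiv i q) x := by
  unfold translatePoly
  induction q using MvPolynomial.induction_on with
  | C a => simp
  | add p q hp hq => simp only [map_add, hp, hq]
  | mul_X p j hp =>
    rw [map_mul, bind₁_X_right, pderiv_mul, hp, pderiv_mul]
    by_cases hij : j = i
    · subst hij
      simp only [map_add, map_mul, bind₁_X_right, pderiv_X_self, pderiv_C, mul_one, map_one,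
        add_zero]
    · simp only [map_add, map_mul, bind₁_X_right, pderiv_X_of_ne hij, pderiv_C, mul_zero,
        map_zero, add_zero]

lemma harmonic_translatePoly {n : ℕ} (q : MvPolynomial (Fin n) ℝ)
    (x : EuclideanSpace ℝ (Fin n))
    (hq : ∑ i : Fin n, MvPolynomial.pderiv i (MvPolynomial.pderiv i q) = 0) :
    ∑ i : Fin n, MvPolynomial.pderiv i (MvPolynomial.pderiv i (translatePoly q x)) = 0 := by
  have : ∀ i : Fin n, MvPolynomial.pderiv i (MvPolynomial.pderiv i (translatePoly q x))
      = translatePoly (MvPolynomial.pderiv i (MvPolynomial.pderiv i q)) x := fun i => by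
    rw [pderiv_translatePoly, pderiv_translatePoly]
  rw [Finset.sum_congr rfl fun i _ => this i]
  have h2 : ∑ i : Fin n, translatePoly (MvPolynomial.pderiv i (MvPolynomial.pderiv i q)) x
      = translatePoly (∑ i : Fin n, MvPolynomial.pderiv i (MvPolynomial.pderiv i q)) x := by
    unfold translatePoly
    exact (map_sum _ _ _).symm
  rw [h2, hq]
  simp [translatePoly]

lemma eval_translatePoly {n : ℕ} (q : MvPolynomial (Fin n) ℝ)
    (x : EuclideanSpace ℝ (Fin n)) (y : Fin n → ℝ) :
    eval y (translatePoly q x) = eval (fun i => y i + x i) q := by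
  unfold translatePoly
  induction q using MvPolynomial.induction_on with
  | C a => simp
  | add p q hp hq => rw [map_add, map_add, hp, hq, map_add]
  | mul_X p j hp => rw [map_mul, bind₁_X_right, map_mul, hp, map_mul]; simp

lemma eval_smul_isHomogeneous {n k : ℕ} (q : MvPolynomial (Fin n) ℝ)
    (h : q.IsHomogeneous k) (t : ℝ) (y : Fin n → ℝ) :
    eval (fun i => t * y i) q = t ^ k * eval y q := by
  rw [eval_eq', eval_eq', Finset.mul_sum]
  refine Finset.sum_congr rfl fun d hd => ?_
  have : ∏ i, (t * y i) ^ d i = (∏ i, t ^ d i) * ∏ i, (y i) ^ d i := by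
    rw [← Finset.prod_mul_distrib]
    exact Finset.prod_congr rfl fun i _ => mul_pow _ _ _
  rw [this, Finset.prod_pow_eq_pow_sum]
  rw [show ∑ i, d i = k by rw [← degree_eq_sum_univ']; exact isHomogeneous_degree h hd]
  ring

lemma eval_smul_expansion {n : ℕ} (p : MvPolynomial (Fin n) ℝ) (t : ℝ) (y : Fin n → ℝ) :
    eval (fun i => t * y i) p
      = ∑ k ∈ Finset.range (p.totalDegree + 1), t ^ k * eval y (homogeneousComponent k p) := by
  conv_lhs => rw [← sum_homogeneousComponent p]
  rw [map_sum]
  exact Finset.sum_congr rfl fun k _ =>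
    eval_smul_isHomogeneous _ (homogeneousComponent_isHomogeneous k p) t y

lemma totalDegree_translatePoly_le {n : ℕ} (q : MvPolynomial (Fin n) ℝ)
    (x : EuclideanSpace ℝ (Fin n)) :
    (translatePoly q x).totalDegree ≤ q.totalDegree := by
  unfold translatePoly
  conv_lhs => rw [as_sum q, map_sum]
  refine (totalDegree_finset_sum _ _).trans (Finset.sup_le fun d hd => ?_)
  rw [bind₁_monomial]
  calc (MvPolynomial.C (coeff d q) *
        ∏ i ∈ d.support, (MvPolynomial.X i + MvPolynomial.C (x i)) ^ d i).totalDegree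
      ≤ (MvPolynomial.C (coeff d q)).totalDegree
        + (∏ i ∈ d.support, (MvPolynomial.X i + MvPolynomial.C (x i)) ^ d i).totalDegree :=
        totalDegree_mul _ _
    _ ≤ 0 + ∑ i ∈ d.support, ((MvPolynomial.X i + MvPolynomial.C (x i)) ^ d i).totalDegree := by
        rw [totalDegree_C]
        exact add_le_add le_rfl (totalDegree_finset_prod _ _)
    _ ≤ ∑ i ∈ d.support, d i := by
        rw [zero_add]
        refine Finset.sum_le_sum fun i _ => ?_
        refine (totalDegree_pow _ _).trans ?_
        have : (MvPolynomial.X i + MvPolynomial.C (x i) : MvPolynomial (Fin n) ℝ).totalDegree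
            ≤ 1 := by
          refine (totalDegree_add _ _).trans ?_
          simp [totalDegree_X, totalDegree_C]
        calc d i * (MvPolynomial.X i + MvPolynomial.C (x i)).totalDegree ≤ d i * 1 :=
              Nat.mul_le_mul_left _ this
          _ = d i := mul_one _
    _ ≤ q.totalDegree := le_totalDegree hd

lemma translatePoly_ne_zero {n : ℕ} (q : MvPolynomial (Fin n) ℝ)
    (x : EuclideanSpace ℝ (Fin n)) (hq : q ≠ 0) : translatePoly q x ≠ 0 := by
  intro h0
  apply hq
  apply MvPolynomial.funext
  intro z
  have := eval_translatePoly q x (fun i => z i - x i)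
  rw [h0] at this
  simp only [map_zero] at this
  have h2 : (fun i => z i - x i + x i) = z := by funext i; ring
  rw [h2] at this
  rw [← this, map_zero]

/-- Key auxiliary: a nonzero harmonic polynomial vanishing at `p` cannot be
nonnegative on a ball around `p`. -/
lemma not_nonneg_on_ball {n : ℕ} (q : MvPolynomial (Fin n) ℝ) (hq : q ≠ 0)
    (hharm : ∑ i : Fin n, MvPolynomial.pderiv i (MvPolynomial.pderiv i q) = 0)
    (p : EuclideanSpace ℝ (Fin n)) (hp : eval (fun i => p i) q = 0)
    (ρ : ℝ) (hρ : 0 < ρ)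
    (hnn : ∀ z : EuclideanSpace ℝ (Fin n), dist z p < ρ → 0 ≤ eval (fun i => z i) q) :
    False := by
  classical
  set Q : MvPolynomial (Fin n) ℝ := translatePoly q p with hQdef
  have hQ0 : Q ≠ 0 := translatePoly_ne_zero q p hq
  have hex : ∃ k, homogeneousComponent k Q ≠ 0 := by
    by_contra hall
    push_neg at hall
    apply hQ0
    have := sum_homogeneousComponent Q
    rw [Finset.sum_eq_zero (fun k _ => hall k)] at this
    exact this.symm
  set m := Nat.find hex with hm
  have hum : homogeneousComponent m Q ≠ 0 := Nat.find_spec hex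
  have hmin : ∀ k < m, homogeneousComponent k Q = 0 := fun k hk => by
    by_contra hne
    exact absurd hk (not_lt.mpr (hm ▸ Nat.find_le hne))
  have hconst : MvPolynomial.coeff 0 Q = 0 := by
    have h1 : eval (0 : Fin n → ℝ) Q = 0 := by
      rw [eval_translatePoly]
      simpa using hp
    rw [eval_zero] at h1
    rwa [constantCoeff_eq] at h1
  have hm1 : 1 ≤ m := by
    rcases Nat.eq_zero_or_pos m with h0 | h0
    · exfalso
      apply hum
      rw [h0, homogeneousComponent_zero, hconst, map_zero]
    · exact h0
  have hmD : m ≤ Q.totalDegree := by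
    by_contra hgt
    exact hum (homogeneousComponent_eq_zero _ _ (by omega))
  -- the rescaled function
  set D := Q.totalDegree with hD
  set u := homogeneousComponent m Q with hu
  set g : (Fin n → ℝ) → ℝ → ℝ := fun y t =>
    ∑ l ∈ Finset.range (D + 1 - m), t ^ l * eval y (homogeneousComponent (m + l) Q) with hg
  have claim1 : ∀ (y : Fin n → ℝ) (t : ℝ),
      eval (fun i => t * y i) Q = t ^ m * g y t := by
    intro y t
    show _ = t ^ m * ∑ l ∈ Finset.range (D + 1 - m),
      t ^ l * eval y (homogeneousComponent (m + l) Q)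
    rw [eval_smul_expansion]
    have hsplit : Finset.range (D + 1) = Finset.Ico 0 m ∪ Finset.Ico m (D + 1) := by
      rw [Finset.range_eq_Ico, ← Finset.Ico_union_Ico_eq_Ico (Nat.zero_le m) (by omega)]
    rw [hsplit, Finset.sum_union (by
      simp [Finset.disjoint_left]
      intro a ha1 ha2
      omega)]
    rw [Finset.sum_eq_zero (fun k hk => by
      rw [hmin k (by simpa using (Finset.mem_Ico.mp hk).2), map_zero, mul_zero])]
    rw [zero_add, Finset.sum_Ico_eq_sum_range]
    rw [Finset.mul_sum]
    refine Finset.sum_congr rfl fun l _ => ?_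
    rw [pow_add]
    ring
  have hgcont : ∀ y : Fin n → ℝ, Continuous (g y) := fun y => by
    apply continuous_finset_sum
    intro l _
    exact (continuous_pow l).mul continuous_const
  have hg0 : ∀ y : Fin n → ℝ, g y 0 = eval y u := by
    intro y
    show ∑ l ∈ Finset.range (D + 1 - m),
      (0:ℝ) ^ l * eval y (homogeneousComponent (m + l) Q) = _
    rw [Finset.sum_eq_single 0]
    · simp [hu]
    · intro l _ hl
      rw [zero_pow hl, zero_mul]
    · intro h0
      exfalso
      apply h0
      simp only [Finset.mem_range]
      omega
  -- nonnegativity of u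
  have hupos : ∀ y : Fin n → ℝ, 0 ≤ eval y u := by
    intro y
    set yE : EuclideanSpace ℝ (Fin n) := (WithLp.equiv 2 (Fin n → ℝ)).symm y with hyE
    have hyEc : ∀ i, yE i = y i := fun i => rfl
    set t1 : ℝ := min (ρ / (‖yE‖ + 1)) 1 with ht1
    have ht1pos : 0 < t1 := by
      apply lt_min _ one_pos
      apply div_pos hρ
      positivity
    have hkey : ∀ t ∈ Set.Ioo (0:ℝ) t1, 0 ≤ g y t := by
      intro t ht
      obtain ⟨ht0, htlt⟩ := ht
      have hz : dist (p + t • yE) p < ρ := by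
        have h1 : dist (p + t • yE) p = ‖t • yE‖ := by
          rw [dist_eq_norm]
          congr 1
          abel
        rw [h1, norm_smul, Real.norm_eq_abs, abs_of_pos ht0]
        have h2 : t * (‖yE‖ + 1) < ρ := by
          have := (lt_div_iff₀ (by positivity : (0:ℝ) < ‖yE‖ + 1)).mp
            (lt_of_lt_of_le htlt (min_le_left _ _))
          linarith
        nlinarith [norm_nonneg yE, ht0]
      have h1 := hnn (p + t • yE) hz
      have h2 : (fun i => (p + t • yE) i) = fun i => t * y i + p i := by
        funext i
        simp [hyEc]
        ring
      rw [h2, ← eval_translatePoly q p, ← hQdef, claim1] at h1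
      have htm : 0 < t ^ m := pow_pos ht0 m
      nlinarith [h1, htm]
    have hlim : Filter.Tendsto (g y) (nhdsWithin 0 (Set.Ioo (0:ℝ) t1)) (nhds (g y 0)) :=
      ((hgcont y).continuousAt).continuousWithinAt
    have hnb : (nhdsWithin (0:ℝ) (Set.Ioo 0 t1)).NeBot :=
      left_nhdsWithin_Ioo_neBot ht1pos
    have := ge_of_tendsto hlim (Filter.eventually_of_mem self_mem_nhdsWithin hkey)
    rwa [hg0] at this
  -- contradiction
  apply hum
  exact harmonic_nonneg_zero hm1 u (homogeneousComponent_isHomogeneous m Q)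
    (harmonic_homogeneousComponent Q (harmonic_translatePoly q p hharm) m) hupos

lemma sign_change {n : ℕ} (q : MvPolynomial (Fin n) ℝ) (hq : q ≠ 0)
    (hharm : ∑ i : Fin n, MvPolynomial.pderiv i (MvPolynomial.pderiv i q) = 0)
    (p : EuclideanSpace ℝ (Fin n)) (hp : eval (fun i => p i) q = 0)
    (ρ : ℝ) (hρ : 0 < ρ) :
    (∃ a : EuclideanSpace ℝ (Fin n), dist a p < ρ ∧ 0 < eval (fun i => a i) q) ∧
    (∃ b : EuclideanSpace ℝ (Fin n), dist b p < ρ ∧ eval (fun i => b i) q < 0) := by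
  have hharmneg : ∑ i : Fin n, MvPolynomial.pderiv i (MvPolynomial.pderiv i (-q)) = 0 := by
    rw [show ∑ i : Fin n, MvPolynomial.pderiv i (MvPolynomial.pderiv i (-q))
        = -∑ i : Fin n, MvPolynomial.pderiv i (MvPolynomial.pderiv i q) by
      rw [← Finset.sum_neg_distrib]
      exact Finset.sum_congr rfl fun i _ => by rw [map_neg, map_neg]]
    rw [hharm, neg_zero]
  constructor
  · by_contra hcon
    push_neg at hcon
    refine not_nonneg_on_ball (-q) (neg_ne_zero.mpr hq) hharmneg p
      (by rw [map_neg, hp, neg_zero]) ρ hρ ?_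
    intro z hz
    rw [map_neg]
    have := hcon z hz
    linarith
  · by_contra hcon
    push_neg at hcon
    exact not_nonneg_on_ball q hq hharm p hp ρ hρ fun z hz => hcon z hz

lemma continuous_evalPt' {n : ℕ} (q : MvPolynomial (Fin n) ℝ) :
    Continuous (fun z : EuclideanSpace ℝ (Fin n) => eval (fun i => z i) q) := by
  refine (MvPolynomial.continuous_eval q).comp ?_
  exact continuous_pi fun i => (EuclideanSpace.proj (𝕜 := ℝ) i).continuous

lemma evalPt_smul_homog {n k : ℕ} (q : MvPolynomial (Fin n) ℝ) (h : q.IsHomogeneous k)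
    (c : ℝ) (z : EuclideanSpace ℝ (Fin n)) :
    eval (fun i => (c • z) i) q = c ^ k * eval (fun i => z i) q := by
  have h2 : (fun i => (c • z) i) = fun i => c * z i := by
    funext i
    simp
  rw [h2, eval_smul_isHomogeneous q h c]

lemma exists_bound {n : ℕ} (f : EuclideanSpace ℝ (Fin n) → ℝ) (hf : Continuous f)
    (R : ℝ) (hR : 0 ≤ R) :
    ∃ M : ℝ, 0 ≤ M ∧ ∀ z ∈ closedBall (0 : EuclideanSpace ℝ (Fin n)) R, |f z| ≤ M := by
  obtain ⟨z0, _, hz0⟩ := (isCompact_closedBall (0 : EuclideanSpace ℝ (Fin n)) R).exists_isMaxOn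
    ⟨0, mem_closedBall_self hR⟩ hf.abs.continuousOn
  exact ⟨|f z0|, abs_nonneg _, fun z hz => hz0 hz⟩

lemma expansion_low {n : ℕ} (T : MvPolynomial (Fin n) ℝ) {dd j : ℕ} (htd : T.totalDegree ≤ dd)
    (hjd : j ≤ dd) (hlow : ∀ k < j, homogeneousComponent k T = 0) (t : ℝ) (y : Fin n → ℝ) :
    eval (fun i => t * y i) T
      = t ^ j * ∑ l ∈ Finset.range (dd + 1 - j),
          t ^ l * eval y (homogeneousComponent (j + l) T) := by
  rw [eval_smul_expansion]
  rw [Finset.sum_subset (Finset.range_subset_range.mpr (by omega) :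
      Finset.range (T.totalDegree + 1) ⊆ Finset.range (dd + 1))
    (fun k _ hk => by
      rw [homogeneousComponent_eq_zero _ _ (by
        simp only [Finset.mem_range] at hk ⊢
        omega), map_zero, mul_zero])]
  have hsplit : Finset.range (dd + 1) = Finset.Ico 0 j ∪ Finset.Ico j (dd + 1) := by
    rw [Finset.range_eq_Ico, ← Finset.Ico_union_Ico_eq_Ico (Nat.zero_le j) (by omega)]
  rw [hsplit, Finset.sum_union (by
    simp only [Finset.disjoint_left, Finset.mem_Ico]
    intro a ha1 ha2
    omega)]
  rw [Finset.sum_eq_zero (fun k hk => by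
    rw [hlow k (by simpa using (Finset.mem_Ico.mp hk).2), map_zero, mul_zero])]
  rw [zero_add, Finset.sum_Ico_eq_sum_range]
  rw [Finset.mul_sum]
  refine Finset.sum_congr rfl (fun l _ => ?_)
  rw [pow_add]
  ring

lemma delta1 {n : ℕ} (f : EuclideanSpace ℝ (Fin n) → ℝ) (hf : Continuous f)
    (Z : Set (EuclideanSpace ℝ (Fin n))) (hZ : Z = {z | f z = 0})
    (ε s : ℝ) (hε : 0 < ε) :
    ∃ δ > 0, ∀ z ∈ closedBall (0 : EuclideanSpace ℝ (Fin n)) s,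
      |f z| < δ → Metric.infDist z Z < ε := by
  set K := closedBall (0 : EuclideanSpace ℝ (Fin n)) s ∩ {z | ε ≤ Metric.infDist z Z} with hK
  have hKc : IsCompact K := (isCompact_closedBall _ _).inter_right
      (isClosed_le continuous_const (Metric.continuous_infDist_pt Z))
  rcases K.eq_empty_or_nonempty with hKe | hKne
  · refine ⟨1, one_pos, fun z hz _ => ?_⟩
    by_contra hge
    push_neg at hge
    have hzK : z ∈ K := ⟨hz, hge⟩
    rw [hKe] at hzK
    exact Set.notMem_empty z hzK
  · obtain ⟨z0, hz0K, hz0min⟩ := hKc.exists_isMinOn hKne hf.abs.continuousOn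
    have hz0Z : z0 ∉ Z := fun hmem => by
      have h1 : ε ≤ Metric.infDist z0 Z := hz0K.2
      rw [Metric.infDist_zero_of_mem hmem] at h1
      linarith
    have hfz0 : f z0 ≠ 0 := fun h0 => hz0Z (by rw [hZ]; exact h0)
    refine ⟨|f z0|, abs_pos.mpr hfz0, fun z hz hfz => ?_⟩
    by_contra hge
    push_neg at hge
    have hzK : z ∈ K := ⟨hz, hge⟩
    have := hz0min hzK
    simp only [Set.mem_setOf_eq] at this
    linarith

lemma near_zeroSet {n : ℕ} (Z : Set (EuclideanSpace ℝ (Fin n)))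
    (hcone : ∀ (c : ℝ) w, w ∈ Z → c • w ∈ Z)
    (s ε : ℝ) (hs : 0 < s) (z : EuclideanSpace ℝ (Fin n)) (hz : ‖z‖ ≤ s)
    (w : EuclideanSpace ℝ (Fin n)) (hw : w ∈ Z) (hd : dist z w < ε) :
    ∃ w' ∈ Z, ‖w'‖ ≤ s ∧ dist z w' < 2 * ε := by
  have hd0 : (0:ℝ) ≤ dist z w := dist_nonneg
  rcases le_or_gt ‖w‖ s with hws | hws
  · exact ⟨w, hw, hws, by linarith⟩
  · have hwpos : 0 < ‖w‖ := lt_trans hs hws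
    set c : ℝ := s / ‖w‖ with hc
    have hc0 : 0 ≤ c := by positivity
    have hc1 : c ≤ 1 := by
      rw [hc, div_le_one hwpos]
      linarith
    refine ⟨c • w, hcone c w hw, ?_, ?_⟩
    · rw [norm_smul, Real.norm_eq_abs, abs_of_nonneg hc0, hc,
        div_mul_cancel₀ _ (ne_of_gt hwpos)]
    · have h1 : dist (c • w) w = ‖w‖ - s := by
        rw [dist_eq_norm]
        have h2 : c • w - w = (c - 1) • w := by rw [sub_smul, one_smul]
        rw [h2, norm_smul, Real.norm_eq_abs, abs_of_nonpos (by linarith), hc]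
        field_simp
        ring
      have h2 : ‖w‖ - s ≤ dist z w := by
        have h3 := norm_sub_norm_le w z
        rw [← dist_eq_norm, dist_comm] at h3
        linarith
      calc dist z (c • w) ≤ dist z w + dist w (c • w) := dist_triangle _ _ _
        _ = dist z w + (‖w‖ - s) := by rw [dist_comm w, h1]
        _ < ε + ε := by linarith
        _ = 2 * ε := by ring

lemma exists_zero_on_segment {n : ℕ} (f : EuclideanSpace ℝ (Fin n) → ℝ) (hf : Continuous f)
    (a b : EuclideanSpace ℝ (Fin n)) (ha : 0 < f a) (hb : f b < 0)
    (S : Set (EuclideanSpace ℝ (Fin n))) (hS : Convex ℝ S) (haS : a ∈ S) (hbS : b ∈ S) :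
    ∃ z ∈ S, f z = 0 := by
  set γ : ℝ → EuclideanSpace ℝ (Fin n) := fun θ => a + θ • (b - a) with hγ
  have hγcont : Continuous γ := by
    apply continuous_const.add
    exact continuous_id.smul continuous_const
  have h0 : (0:ℝ) ∈ Set.Icc (f (γ 1)) (f (γ 0)) := by
    constructor
    · show f (a + (1:ℝ) • (b - a)) ≤ 0
      rw [one_smul, add_sub_cancel]
      linarith
    · show 0 ≤ f (a + (0:ℝ) • (b - a))
      rw [zero_smul, add_zero]
      linarith
  obtain ⟨θ, hθ, hθz⟩ := intermediate_value_Icc' zero_le_one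
    (hf.comp hγcont).continuousOn h0
  exact ⟨γ θ, hS.add_smul_sub_mem haS hbS hθ, hθz⟩


end
end AuxiliaryLemmas

/-- The unique geometric blow-up of the zero set of a harmonic polynomial h at x ∈ Σ_h is
the zero set of the lowest-order nonzero homogeneous part of h centered at x. -/

theorem zeroSet_blowup {n : ℕ} (h : MvPolynomial (Fin n) ℝ) (d : ℕ) (hd : 1 ≤ d)
    (hdeg : h.totalDegree = d) (hharm : IsHarmonic h)
    (x : EuclideanSpace ℝ (Fin n)) (hx : x ∈ zeroSet h)
    (j : ℕ) (hj : homPart h x j ≠ 0) (hlow : ∀ k < j, homPart h x k = 0)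
    (r : ℕ → ℝ) (hr : ∀ i, 0 < r i) (hr0 : Filter.Tendsto r Filter.atTop (nhds 0))
    (s : ℝ) (hs : 0 < s) :
    Filter.Tendsto (fun i => EMetric.hausdorffEdist
      (((fun y => (r i)⁻¹ • (y - x)) '' zeroSet h) ∩ Metric.closedBall 0 s)
      (zeroSet (homPart h x j) ∩ Metric.closedBall 0 s))
      Filter.atTop (nhds 0) := by
  classical
  have hharm' : ∑ i : Fin n, MvPolynomial.pderiv i (MvPolynomial.pderiv i h) = 0 := hharm
  set T : MvPolynomial (Fin n) ℝ := translatePoly h x with hT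
  have htd : T.totalDegree ≤ d := hdeg ▸ totalDegree_translatePoly_le h x
  have hjd : j ≤ d := by
    by_contra hgt
    apply hj
    show homogeneousComponent j T = 0
    exact homogeneousComponent_eq_zero _ _ (by omega)
  have hconstT : MvPolynomial.coeff 0 T = 0 := by
    have h1 : eval (0 : Fin n → ℝ) T = 0 := by
      rw [hT, eval_translatePoly]
      simpa using (show eval (fun i => x i) h = 0 from hx)
    rw [eval_zero] at h1
    rwa [constantCoeff_eq] at h1
  have hj1 : 1 ≤ j := by
    rcases Nat.eq_zero_or_pos j with h0 | h0
    · exfalso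
      apply hj
      rw [h0]
      show homogeneousComponent 0 T = 0
      rw [homogeneousComponent_zero, hconstT, map_zero]
    · exact h0
  set Pj : MvPolynomial (Fin n) ℝ := homPart h x j with hPjdef
  have hPjhom : Pj.IsHomogeneous j := homogeneousComponent_isHomogeneous j T
  have hPjharm : ∑ i : Fin n, MvPolynomial.pderiv i (MvPolynomial.pderiv i Pj) = 0 :=
    harmonic_homogeneousComponent T (harmonic_translatePoly h x hharm') j
  set Z : Set (EuclideanSpace ℝ (Fin n)) := zeroSet Pj with hZdef
  have h0Z : (0 : EuclideanSpace ℝ (Fin n)) ∈ Z := by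
    show eval (fun i => (0 : EuclideanSpace ℝ (Fin n)) i) Pj = 0
    have h2 : (fun i => (0 : EuclideanSpace ℝ (Fin n)) i) = (0 : Fin n → ℝ) := rfl
    rw [h2, eval_zero, constantCoeff_eq]
    refine hPjhom.coeff_eq_zero ?_
    rw [map_zero]
    omega
  have hZne : Z.Nonempty := ⟨0, h0Z⟩
  have hcone : ∀ (c : ℝ) w, w ∈ Z → c • w ∈ Z := fun c w hw => by
    show eval (fun i => (c • w) i) Pj = 0
    rw [evalPt_smul_homog Pj hPjhom c w, show eval (fun i => w i) Pj = 0 from hw, mul_zero]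
  set F : ℝ → EuclideanSpace ℝ (Fin n) → ℝ := fun t z =>
    ∑ l ∈ Finset.range (d + 1 - j),
      t ^ l * eval (fun i => z i) (homPart h x (j + l)) with hF
  have hFcont : ∀ t, Continuous (F t) := fun t => continuous_finset_sum _ fun l _ =>
    continuous_const.mul (continuous_evalPt' _)
  have hexp : ∀ (t : ℝ) (z : EuclideanSpace ℝ (Fin n)),
      eval (fun i => (x + t • z) i) h = t ^ j * F t z := by
    intro t z
    have h1 : (fun i => (x + t • z) i) = fun i => t * z i + x i := by
      funext i
      simp [mul_comm]
      ring
    rw [h1, ← eval_translatePoly h x (fun i => t * z i)]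
    exact expansion_low T htd hjd (fun k hk => hlow k hk) t (fun i => z i)
  have himage : ∀ t : ℝ, 0 < t →
      ((fun y => t⁻¹ • (y - x)) '' zeroSet h)
        = {z : EuclideanSpace ℝ (Fin n) | F t z = 0} := by
    intro t ht
    ext z
    constructor
    · rintro ⟨y, hy, rfl⟩
      show F t _ = 0
      have h1 : x + t • (t⁻¹ • (y - x)) = y := by
        rw [smul_smul, mul_inv_cancel₀ (ne_of_gt ht), one_smul]
        abel
      have h2 := hexp t (t⁻¹ • (y - x))
      rw [h1] at h2
      have h3 : t ^ j * F t (t⁻¹ • (y - x)) = 0 := by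
        rw [← h2]
        exact hy
      rcases mul_eq_zero.mp h3 with h4 | h4
      · exact absurd h4 (pow_ne_zero _ (ne_of_gt ht))
      · exact h4
    · intro hz
      refine ⟨x + t • z, ?_, ?_⟩
      · show eval (fun i => (x + t • z) i) h = 0
        rw [hexp t z, show F t z = 0 from hz, mul_zero]
      · show t⁻¹ • (x + t • z - x) = z
        rw [add_sub_cancel_left, smul_smul, inv_mul_cancel₀ (ne_of_gt ht), one_smul]
  -- sup bounds
  have hsb : ∀ l : ℕ, ∃ M, 0 ≤ M ∧ ∀ z ∈ closedBall (0 : EuclideanSpace ℝ (Fin n)) (s+1),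
      |eval (fun i => z i) (homPart h x (j + l))| ≤ M := fun l =>
    exists_bound _ (continuous_evalPt' _) (s+1) (by linarith)
  choose M hM0 hMb using hsb
  set C : ℝ := ∑ l ∈ Finset.range (d + 1 - j), M l with hC
  have hC0 : 0 ≤ C := Finset.sum_nonneg fun l _ => hM0 l
  have hFbound : ∀ t : ℝ, 0 < t → t ≤ 1 →
      ∀ z ∈ closedBall (0 : EuclideanSpace ℝ (Fin n)) (s+1),
      |F t z - eval (fun i => z i) Pj| ≤ t * C := by
    intro t ht0 ht1 z hz
    have h0mem : 0 ∈ Finset.range (d + 1 - j) := by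
      simp only [Finset.mem_range]
      omega
    have hsplit : F t z = eval (fun i => z i) Pj
        + ∑ l ∈ Finset.range (d + 1 - j) \ {0},
            t ^ l * eval (fun i => z i) (homPart h x (j + l)) := by
      show (∑ l ∈ Finset.range (d + 1 - j),
        t ^ l * eval (fun i => z i) (homPart h x (j + l))) = _
      rw [Finset.sum_eq_add_sum_sdiff_singleton_of_mem h0mem]
      norm_num
      rfl
    rw [hsplit, add_sub_cancel_left]
    calc |∑ l ∈ Finset.range (d + 1 - j) \ {0},
            t ^ l * eval (fun i => z i) (homPart h x (j + l))|
        ≤ ∑ l ∈ Finset.range (d + 1 - j) \ {0},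
            |t ^ l * eval (fun i => z i) (homPart h x (j + l))| :=
          Finset.abs_sum_le_sum_abs _ _
      _ ≤ ∑ l ∈ Finset.range (d + 1 - j) \ {0}, t * M l := by
          refine Finset.sum_le_sum fun l hl => ?_
          rw [abs_mul, abs_pow, abs_of_pos ht0]
          have hl1 : 1 ≤ l := by
            simp only [Finset.mem_sdiff, Finset.mem_singleton] at hl
            omega
          have h5 : t ^ l ≤ t := by
            calc t ^ l ≤ t ^ 1 := pow_le_pow_of_le_one (le_of_lt ht0) ht1 hl1
              _ = t := pow_one t
          exact mul_le_mul h5 (hMb l z hz) (abs_nonneg _) (le_of_lt ht0)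
      _ ≤ t * C := by
          rw [← Finset.mul_sum]
          refine mul_le_mul_of_nonneg_left ?_ (le_of_lt ht0)
          exact Finset.sum_le_sum_of_subset_of_nonneg (Finset.sdiff_subset)
            (fun l hl _ => hM0 l)
  -- start the limit argument
  rw [ENNReal.tendsto_nhds_zero]
  intro ε' hε'
  obtain ⟨η, hη0, hηε⟩ : ∃ η : ℝ, 0 < η ∧ ENNReal.ofReal η ≤ ε' := by
    rcases eq_or_ne ε' ⊤ with rfl | htop
    · exact ⟨1, one_pos, le_top⟩
    · exact ⟨ε'.toReal, ENNReal.toReal_pos (ne_of_gt hε') htop,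
        le_of_eq (ENNReal.ofReal_toReal htop)⟩
  set ε : ℝ := min (min (η/5) (s/8)) (1/2) with hε
  have hε0 : 0 < ε := lt_min (lt_min (by positivity) (by positivity)) (by norm_num)
  have hε1 : ε ≤ 1/2 := min_le_right _ _
  have hεs : ε ≤ s/8 := le_trans (min_le_left _ _) (min_le_right _ _)
  have hεη : 5 * ε ≤ η := by
    have h20 : ε ≤ η/5 := le_trans (min_le_left (min (η/5) (s/8)) (1/2)) (min_le_left _ _)
    linarith
  obtain ⟨δ1, hδ1pos, hδ1⟩ := delta1 (fun z => eval (fun i => z i) Pj)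
    (continuous_evalPt' Pj) Z rfl ε s hε0
  -- covering
  set K' : Set (EuclideanSpace ℝ (Fin n)) := Z ∩ closedBall 0 s with hK'
  have hZclosed : IsClosed Z := by
    have : Z = (fun z : EuclideanSpace ℝ (Fin n) => eval (fun i => z i) Pj) ⁻¹' {0} := rfl
    rw [this]
    exact IsClosed.preimage (continuous_evalPt' Pj) isClosed_singleton
  have hK'c : IsCompact K' := (isCompact_closedBall _ _).inter_left hZclosed
  have hK'ne : K'.Nonempty := ⟨0, h0Z, mem_closedBall_self (le_of_lt hs)⟩
  have hcover : K' ⊆ ⋃ (q : K'), ball (q : EuclideanSpace ℝ (Fin n)) ε := fun z hz =>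
    Set.mem_iUnion.mpr ⟨⟨z, hz⟩, mem_ball_self hε0⟩
  obtain ⟨fi, hfi⟩ := hK'c.elim_finite_subcover
    (fun q : K' => ball (q : EuclideanSpace ℝ (Fin n)) ε) (fun q => isOpen_ball) hcover
  have hsc : ∀ q : K', ∃ a : EuclideanSpace ℝ (Fin n),
      (dist a (q : EuclideanSpace ℝ (Fin n)) < ε ∧ 0 < eval (fun i => a i) Pj) ∧
      ∃ b : EuclideanSpace ℝ (Fin n), dist b (q : EuclideanSpace ℝ (Fin n)) < ε ∧
        eval (fun i => b i) Pj < 0 := fun q => by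
    obtain ⟨⟨a, ha1, ha2⟩, ⟨b, hb1, hb2⟩⟩ := sign_change Pj hj hPjharm q
      (show eval (fun i => (q : EuclideanSpace ℝ (Fin n)) i) Pj = 0 from q.2.1) ε hε0
    exact ⟨a, ⟨ha1, ha2⟩, b, hb1, hb2⟩
  choose av hav bv hbv using hsc
  have hfine : fi.Nonempty := by
    obtain ⟨z, hz⟩ := hK'ne
    obtain ⟨q, hq, _⟩ := Set.mem_iUnion₂.mp (hfi hz)
    exact ⟨q, hq⟩
  set δ2 : ℝ := fi.inf' hfine (fun q => min (eval (fun i => (av q) i) Pj)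
    (-(eval (fun i => (bv q) i) Pj))) with hδ2
  have hδ2pos : 0 < δ2 := by
    rw [hδ2, Finset.lt_inf'_iff]
    intro q hq
    exact lt_min (hav q).2 (neg_pos.mpr (hbv q).2)
  set δ : ℝ := min δ1 δ2 with hδ
  have hδpos : 0 < δ := lt_min hδ1pos hδ2pos
  have hev : ∀ᶠ i in atTop, r i < min 1 (δ / (C + 1)) :=
    hr0.eventually_lt_const (by positivity)
  refine hev.mono fun i hi => ?_
  have ht0 : 0 < r i := hr i
  have ht1 : r i ≤ 1 := le_of_lt (lt_of_lt_of_le hi (min_le_left _ _))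
  have htC : r i * C < δ := by
    have h6 : r i < δ / (C+1) := lt_of_lt_of_le hi (min_le_right _ _)
    have h7 := (lt_div_iff₀ (by positivity : (0:ℝ) < C + 1)).mp h6
    nlinarith
  rw [himage (r i) ht0]
  refine le_trans (EMetric.hausdorffEdist_le_of_mem_edist (r := ENNReal.ofReal η) ?_ ?_)
    hηε
  · -- zeros of F (r i) are close to Z
    intro z hz
    have hz1 : F (r i) z = 0 := hz.1
    have hz2 : ‖z‖ ≤ s := mem_closedBall_zero_iff.mp hz.2
    have hzs1 : z ∈ closedBall (0 : EuclideanSpace ℝ (Fin n)) (s+1) :=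
      closedBall_subset_closedBall (by linarith) hz.2
    have hPjz : |eval (fun i => z i) Pj| < δ1 := by
      have h8 := hFbound (r i) ht0 ht1 z hzs1
      rw [hz1] at h8
      rw [abs_sub_comm, sub_zero] at h8
      calc |eval (fun i => z i) Pj| ≤ r i * C := h8
        _ < δ := htC
        _ ≤ δ1 := min_le_left _ _
    have hinf := hδ1 z hz.2 hPjz
    obtain ⟨w, hwZ, hwd⟩ := (Metric.infDist_lt_iff hZne).mp hinf
    obtain ⟨w', hw'Z, hw's, hw'd⟩ := near_zeroSet Z hcone s ε hs z hz2 w hwZ hwd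
    refine ⟨w', ⟨hw'Z, mem_closedBall_zero_iff.mpr hw's⟩, ?_⟩
    rw [edist_dist]
    apply ENNReal.ofReal_le_ofReal
    have : dist z w' < 2 * ε := hw'd
    linarith [hεη, hε0.le]
  · -- points of Z are close to zeros of F (r i)
    intro p hp
    have hps : ‖p‖ ≤ s := mem_closedBall_zero_iff.mp hp.2
    set c0 : ℝ := 1 - 3*ε/s with hc0
    have h3es : 3*ε/s ≤ 3/8 := by
      rw [div_le_iff₀ hs]
      linarith
    have hc00 : 0 < c0 := by rw [hc0]; linarith
    have hc01 : c0 ≤ 1 := by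
      rw [hc0]
      have : 0 ≤ 3*ε/s := by positivity
      linarith
    set p' : EuclideanSpace ℝ (Fin n) := c0 • p with hp'
    have hp'Z : p' ∈ Z := hcone _ _ hp.1
    have hp'n : ‖p'‖ ≤ s - 3*ε := by
      rw [hp', norm_smul, Real.norm_eq_abs, abs_of_pos hc00]
      calc c0 * ‖p‖ ≤ c0 * s := mul_le_mul_of_nonneg_left hps (le_of_lt hc00)
        _ = s - 3*ε := by rw [hc0]; field_simp
    have hp'K' : p' ∈ K' := ⟨hp'Z, mem_closedBall_zero_iff.mpr (by linarith)⟩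
    obtain ⟨q, hqfi, hqball⟩ := Set.mem_iUnion₂.mp (hfi hp'K')
    have hdp'q : dist p' (q : EuclideanSpace ℝ (Fin n)) < ε := mem_ball.mp hqball
    set a : EuclideanSpace ℝ (Fin n) := av q with ha
    set b : EuclideanSpace ℝ (Fin n) := bv q with hb
    have haq : dist a (q : EuclideanSpace ℝ (Fin n)) < ε := (hav q).1
    have hapos : 0 < eval (fun i => a i) Pj := (hav q).2
    have hbq : dist b (q : EuclideanSpace ℝ (Fin n)) < ε := (hbv q).1
    have hbneg : eval (fun i => b i) Pj < 0 := (hbv q).2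
    have haP : a ∈ closedBall p' (2*ε) := by
      rw [mem_closedBall]
      calc dist a p' ≤ dist a (q : EuclideanSpace ℝ (Fin n))
            + dist (q : EuclideanSpace ℝ (Fin n)) p' := dist_triangle _ _ _
        _ ≤ ε + ε := by
            rw [dist_comm (q : EuclideanSpace ℝ (Fin n)) p']
            linarith
        _ = 2 * ε := by ring
    have hbP : b ∈ closedBall p' (2*ε) := by
      rw [mem_closedBall]
      calc dist b p' ≤ dist b (q : EuclideanSpace ℝ (Fin n))
            + dist (q : EuclideanSpace ℝ (Fin n)) p' := dist_triangle _ _ _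
        _ ≤ ε + ε := by
            rw [dist_comm (q : EuclideanSpace ℝ (Fin n)) p']
            linarith
        _ = 2 * ε := by ring
    have haball : a ∈ closedBall (0 : EuclideanSpace ℝ (Fin n)) (s+1) := by
      rw [mem_closedBall_zero_iff]
      calc ‖a‖ = dist a 0 := (dist_zero_right a).symm
        _ ≤ dist a p' + dist p' 0 := dist_triangle _ _ _
        _ ≤ 2*ε + ‖p'‖ := by
            rw [dist_zero_right]
            exact add_le_add (mem_closedBall.mp haP) le_rfl
        _ ≤ s + 1 := by linarith
    have hbball : b ∈ closedBall (0 : EuclideanSpace ℝ (Fin n)) (s+1) := by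
      rw [mem_closedBall_zero_iff]
      calc ‖b‖ = dist b 0 := (dist_zero_right b).symm
        _ ≤ dist b p' + dist p' 0 := dist_triangle _ _ _
        _ ≤ 2*ε + ‖p'‖ := by
            rw [dist_zero_right]
            exact add_le_add (mem_closedBall.mp hbP) le_rfl
        _ ≤ s + 1 := by linarith
    have hδ2a : δ2 ≤ eval (fun i => a i) Pj :=
      le_trans (Finset.inf'_le _ hqfi) (min_le_left _ _)
    have hδ2b : δ2 ≤ -(eval (fun i => b i) Pj) :=
      le_trans (Finset.inf'_le _ hqfi) (min_le_right _ _)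
    have hFa : 0 < F (r i) a := by
      have h8 := abs_le.mp (hFbound (r i) ht0 ht1 a haball)
      have h9 : r i * C < δ2 := lt_of_lt_of_le htC (min_le_right _ _)
      linarith [h8.1]
    have hFb : F (r i) b < 0 := by
      have h8 := abs_le.mp (hFbound (r i) ht0 ht1 b hbball)
      have h9 : r i * C < δ2 := lt_of_lt_of_le htC (min_le_right _ _)
      linarith [h8.2]
    obtain ⟨z, hzS, hz0⟩ := exists_zero_on_segment (F (r i)) (hFcont (r i)) a b hFa hFb
      (closedBall p' (2*ε)) (convex_closedBall _ _) haP hbP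
    have hzp' : dist z p' ≤ 2*ε := mem_closedBall.mp hzS
    have hzn : ‖z‖ ≤ s := by
      calc ‖z‖ = dist z 0 := (dist_zero_right z).symm
        _ ≤ dist z p' + dist p' 0 := dist_triangle _ _ _
        _ ≤ 2*ε + ‖p'‖ := by
            rw [dist_zero_right]
            exact add_le_add hzp' le_rfl
        _ ≤ s := by linarith
    refine ⟨z, ⟨hz0, mem_closedBall_zero_iff.mpr hzn⟩, ?_⟩
    rw [edist_dist]
    apply ENNReal.ofReal_le_ofReal
    have hdpp' : dist p p' ≤ 3*ε := by
      have h10 : p - p' = (3*ε/s) • p := by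
        rw [hp', hc0, sub_smul, one_smul, sub_sub_cancel]
      rw [dist_eq_norm, h10, norm_smul, Real.norm_eq_abs,
        abs_of_nonneg (by positivity : (0:ℝ) ≤ 3*ε/s)]
      calc 3*ε/s * ‖p‖ ≤ 3*ε/s * s := by
            refine mul_le_mul_of_nonneg_left hps ?_
            positivity
        _ = 3*ε := by field_simp
    calc dist p z ≤ dist p p' + dist p' z := dist_triangle _ _ _
      _ ≤ 3*ε + 2*ε := by
          rw [dist_comm p' z]
          exact add_le_add hdpp' hzp'
      _ = 5*ε := by ring
      _ ≤ η := hεη
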